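/- Let X be a real normed space, let n ≥ 2 and 1 ≤ k ≤ n−1, and let L ≥ 0. Let N(X₀(n)) denote the set of all nonempty finite subsets x ⊆ X with at most n elements, diam(x) = 1 and 0 ∈ x. Suppose R assigns to each x ∈ N(X₀(n)) a nonempty subset R(x) ⊆ X with at most k elements such that: (a) d_H(R(x), R(y)) ≤ L·d_H(x,y) for all x, y ∈ N(X₀(n)); (b) R(x + v) = R(x) + v whenever x ∈ N(X₀(n)), v ∈ X and x + v ∈ N(X₀(n)); (c) R(x) is contained in the convex hull of x; and (d) R(x) = x whenever x has at most k elements. Then there exists a map r assigning to each nonempty subset x ⊆ X with at most n elements a nonempty subset r(x) ⊆ X with at most k elements, such that r(x) = x whenever x has at most k elements, r(t·x + v) = t·r(x) + v for all t ≥ 0 and v ∈ X, and d_H(r(x), r(y)) ≤ (6L + 5)·d_H(x, y) for all x, y. -/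

import Mathlib

open Metric EMetric Set Bornology

set_option linter.unusedSectionVars false
set_option linter.unusedVariables false
section helpers
variable {X : Type*} [NormedAddCommGroup X] [NormedSpace ℝ X]

lemma my_diam_image_eq {c : ℝ} (hc : 0 ≤ c) {f : X → X}
    (hf : ∀ z w, dist (f z) (f w) = c * dist z w) {s : Set X} (hs : IsBounded s) :
    Metric.diam (f '' s) = c * Metric.diam s := by
  have himb : IsBounded (f '' s) := by
    rcases Metric.isBounded_iff.1 hs with ⟨C, hC⟩
    refine Metric.isBounded_iff.2 ⟨c * C, ?_⟩
    rintro _ ⟨z, hz, rfl⟩ _ ⟨w, hw, rfl⟩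
    rw [hf]; exact mul_le_mul_of_nonneg_left (hC hz hw) hc
  refine le_antisymm ?_ ?_
  · refine Metric.diam_le_of_forall_dist_le (mul_nonneg hc Metric.diam_nonneg) ?_
    rintro _ ⟨z, hz, rfl⟩ _ ⟨w, hw, rfl⟩
    rw [hf]
    exact mul_le_mul_of_nonneg_left (Metric.dist_le_diam_of_mem hs hz hw) hc
  rcases eq_or_lt_of_le hc with h0 | h0
  · simp [← h0, Metric.diam_nonneg]
  · have : Metric.diam s ≤ c⁻¹ * Metric.diam (f '' s) := by
      refine Metric.diam_le_of_forall_dist_le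
        (mul_nonneg (by positivity) Metric.diam_nonneg) ?_
      intro z hz w hw
      have := Metric.dist_le_diam_of_mem himb (Set.mem_image_of_mem f hz)
        (Set.mem_image_of_mem f hw)
      rw [hf] at this
      rw [← mul_le_mul_iff_right₀ h0, ← mul_assoc, mul_inv_cancel₀ h0.ne', one_mul]
      exact this
    calc c * Metric.diam s ≤ c * (c⁻¹ * Metric.diam (f '' s)) :=
          mul_le_mul_of_nonneg_left this hc
      _ = Metric.diam (f '' s) := by field_simp

lemma my_exists_near {A B : Set X} (hB : B.Finite) (hBne : B.Nonempty)
    (hfin : hausdorffEdist A B ≠ ⊤) {a : X} (ha : a ∈ A) :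
    ∃ b ∈ B, dist a b ≤ Metric.hausdorffDist A B := by
  obtain ⟨b, hb, hbd⟩ := hB.isCompact.exists_infDist_eq_dist hBne a
  exact ⟨b, hb, by rw [← hbd]; exact Metric.infDist_le_hausdorffDist_of_mem ha hfin⟩

lemma my_hd_map_le {c : ℝ} (hc : 0 ≤ c) {f : X → X}
    (hf : ∀ z w, dist (f z) (f w) = c * dist z w) {A B : Set X}
    (hA : A.Finite) (hAne : A.Nonempty) (hB : B.Finite) (hBne : B.Nonempty) :
    Metric.hausdorffDist (f '' A) (f '' B) ≤ c * Metric.hausdorffDist A B := by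
  have hfin : hausdorffEdist A B ≠ ⊤ :=
    Metric.hausdorffEdist_ne_top_of_nonempty_of_bounded hAne hBne hA.isBounded hB.isBounded
  have hfin' : hausdorffEdist B A ≠ ⊤ := by rwa [EMetric.hausdorffEdist, hausdorffEdist_comm]
  refine Metric.hausdorffDist_le_of_mem_dist
    (mul_nonneg hc Metric.hausdorffDist_nonneg) ?_ ?_
  · rintro _ ⟨z, hz, rfl⟩
    obtain ⟨b, hb, hbd⟩ := my_exists_near hB hBne hfin hz
    exact ⟨f b, Set.mem_image_of_mem f hb,
      by rw [hf]; exact mul_le_mul_of_nonneg_left hbd hc⟩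
  · rintro _ ⟨z, hz, rfl⟩
    obtain ⟨b, hb, hbd⟩ := my_exists_near hA hAne hfin' hz
    refine ⟨f b, Set.mem_image_of_mem f hb, ?_⟩
    rw [dist_comm, hf, Metric.hausdorffDist_comm, dist_comm]
    exact mul_le_mul_of_nonneg_left hbd hc

lemma my_hd_two_maps {f g : X → X} {S : Set X} (hS : S.Nonempty) {r : ℝ} (hr : 0 ≤ r)
    (h : ∀ p ∈ S, dist (f p) (g p) ≤ r) :
    Metric.hausdorffDist (f '' S) (g '' S) ≤ r := by
  refine Metric.hausdorffDist_le_of_mem_dist hr ?_ ?_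
  · rintro _ ⟨z, hz, rfl⟩
    exact ⟨g z, Set.mem_image_of_mem g hz, h z hz⟩
  · rintro _ ⟨z, hz, rfl⟩
    exact ⟨f z, Set.mem_image_of_mem f hz, by rw [dist_comm]; exact h z hz⟩

lemma my_diam_le {A B : Set X} (hA : A.Finite) (hAne : A.Nonempty)
    (hB : B.Finite) (hBne : B.Nonempty) :
    Metric.diam B ≤ Metric.diam A + 2 * Metric.hausdorffDist A B := by
  have hfin : hausdorffEdist B A ≠ ⊤ :=
    Metric.hausdorffEdist_ne_top_of_nonempty_of_bounded hBne hAne hB.isBounded hA.isBounded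
  refine Metric.diam_le_of_forall_dist_le
    (by have := Metric.hausdorffDist_nonneg (s := A) (t := B)
        have := Metric.diam_nonneg (s := A); linarith) ?_
  intro z hz w hw
  obtain ⟨p, hp, hpd⟩ := my_exists_near hA hAne hfin hz
  obtain ⟨q, hq, hqd⟩ := my_exists_near hA hAne hfin hw
  have h1 : dist z w ≤ dist z p + dist p q + dist q w := dist_triangle4 z p q w
  have h2 : dist p q ≤ Metric.diam A := Metric.dist_le_diam_of_mem hA.isBounded hp hq
  have h3 : Metric.hausdorffDist B A = Metric.hausdorffDist A B := Metric.hausdorffDist_comm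
  rw [dist_comm q w] at h1
  linarith [hpd, hqd]

end helpers

/-- Homogeneous Lipschitz extension: a translation-invariant Lipschitz map
`R : N(X₀(n)) → X(k)` with `R(x) ⊆ conv(x)` fixing `X(k)` extends to an affine
Lipschitz retraction `r : X(n) → X(k)` with `Lip(r) = 6 Lip(R) + 5`. -/
theorem stmt_3 {X : Type*} [NormedAddCommGroup X] [NormedSpace ℝ X]
    (n k : ℕ) (hn : 2 ≤ n) (hk1 : 1 ≤ k) (hkn : k ≤ n - 1)
    (L : ℝ) (hL : 0 ≤ L)
    (R : Set X → Set X)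
    -- R maps N(X₀(n)) into nonempty sets of at most k elements
    (hR0 : ∀ x : Set X, x.encard ≤ n → Metric.diam x = 1 → (0 : X) ∈ x →
      (R x).Nonempty ∧ (R x).encard ≤ k)
    -- (a) R is L-Lipschitz on N(X₀(n))
    (hRlip : ∀ x y : Set X, x.encard ≤ n → Metric.diam x = 1 → (0 : X) ∈ x →
      y.encard ≤ n → Metric.diam y = 1 → (0 : X) ∈ y →
      Metric.hausdorffDist (R x) (R y) ≤ L * Metric.hausdorffDist x y)
    -- (b) R is translation-invariant within N(X₀(n))
    (hRtrans : ∀ (x : Set X) (v : X), x.encard ≤ n → Metric.diam x = 1 → (0 : X) ∈ x →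
      ((fun a => a + v) '' x).encard ≤ n → Metric.diam ((fun a => a + v) '' x) = 1 →
      (0 : X) ∈ (fun a => a + v) '' x →
      R ((fun a => a + v) '' x) = (fun a => a + v) '' R x)
    -- (c) R(x) ⊆ conv(x)
    (hRconv : ∀ x : Set X, x.encard ≤ n → Metric.diam x = 1 → (0 : X) ∈ x →
      R x ⊆ convexHull ℝ x)
    -- (d) R fixes sets of at most k elements
    (hRid : ∀ x : Set X, x.encard ≤ n → Metric.diam x = 1 → (0 : X) ∈ x →
      x.encard ≤ k → R x = x) :
    ∃ r : Set X → Set X,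
      (∀ x : Set X, x.Nonempty → x.encard ≤ n → (r x).Nonempty ∧ (r x).encard ≤ k) ∧
      (∀ x : Set X, x.Nonempty → x.encard ≤ k → r x = x) ∧
      (∀ (x : Set X) (t : ℝ) (v : X), x.Nonempty → x.encard ≤ n → 0 ≤ t →
        r ((fun a => t • a + v) '' x) = (fun a => t • a + v) '' r x) ∧
      (∀ x y : Set X, x.Nonempty → x.encard ≤ n → y.Nonempty → y.encard ≤ n →
        Metric.hausdorffDist (r x) (r y) ≤ (6 * L + 5) * Metric.hausdorffDist x y) := by
  classical
  have hfin : ∀ x : Set X, x.encard ≤ n → x.Finite := by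
    intro x hx
    refine Set.encard_ne_top_iff.mp ?_
    intro h; rw [h] at hx; simp at hx
  have hdpos : ∀ x : Set X, x.Finite → x.Nontrivial → 0 < Metric.diam x := by
    rintro x hf ⟨a, ha, b, hb, hab⟩
    have h1 : dist a b ≤ Metric.diam x := Metric.dist_le_diam_of_mem hf.isBounded ha hb
    have h2 : 0 < dist a b := dist_pos.mpr hab
    linarith
  have distf : ∀ (c : ℝ) (v z w : X), dist (c • z + v) (c • w + v) = |c| * dist z w := by
    intro c v z w
    rw [dist_eq_norm, dist_eq_norm, add_sub_add_right_eq_sub, ← smul_sub, norm_smul,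
      Real.norm_eq_abs]
  have distg : ∀ (c : ℝ) (a z w : X), dist (c • (z - a)) (c • (w - a)) = |c| * dist z w := by
    intro c a z w
    rw [dist_eq_norm, dist_eq_norm, ← smul_sub, sub_sub_sub_cancel_right, norm_smul,
      Real.norm_eq_abs]
  have ginj : ∀ (c : ℝ), c ≠ 0 → ∀ a : X, Function.Injective (fun z : X => c • (z - a)) := by
    intro c hc a z w h
    simp only at h
    have h2 : z - a = w - a := smul_right_injective X hc h
    exact sub_left_inj.mp h2
  have finj : ∀ (c : ℝ), c ≠ 0 → ∀ v : X, Function.Injective (fun z : X => c • z + v) := by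
    intro c hc v z w h
    simp only at h
    exact smul_right_injective X hc (add_right_cancel h)
  have Nfacts : ∀ (x : Set X) (a : X), a ∈ x → x.encard ≤ n → x.Nontrivial →
      ((fun z => (Metric.diam x)⁻¹ • (z - a)) '' x).encard ≤ n ∧
      Metric.diam ((fun z => (Metric.diam x)⁻¹ • (z - a)) '' x) = 1 ∧
      (0:X) ∈ (fun z => (Metric.diam x)⁻¹ • (z - a)) '' x := by
    intro x a ha hxn hnt
    have hxf := hfin x hxn
    have hd := hdpos x hxf hnt
    refine ⟨?_, ?_, ⟨a, ha, by simp⟩⟩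
    · rw [(ginj _ (inv_ne_zero hd.ne') a).encard_image]; exact hxn
    · rw [my_diam_image_eq (inv_nonneg.mpr hd.le)
        (fun z w => (distg _ a z w).trans (by rw [abs_of_pos (inv_pos.mpr hd)]))
        hxf.isBounded, inv_mul_cancel₀ hd.ne']
  have Rfacts : ∀ s : Set X, s.encard ≤ n → Metric.diam s = 1 → (0:X) ∈ s →
      (R s).Nonempty ∧ (R s).Finite ∧ (R s).encard ≤ k ∧ ∀ p ∈ R s, ‖p‖ ≤ 1 := by
    intro s h1 h2 h3
    obtain ⟨hne, hcard⟩ := hR0 s h1 h2 h3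
    have hRf : (R s).Finite := Set.encard_ne_top_iff.mp
      (by intro h; rw [h] at hcard; simp at hcard)
    refine ⟨hne, hRf, hcard, ?_⟩
    have hsub : s ⊆ Metric.closedBall (0:X) 1 := by
      intro z hz
      rw [Metric.mem_closedBall]
      calc dist z 0 ≤ Metric.diam s := Metric.dist_le_diam_of_mem (hfin s h1).isBounded hz h3
        _ = 1 := h2
    intro p hp
    have hsub2 : convexHull ℝ s ⊆ Metric.closedBall (0:X) 1 :=
      convexHull_min hsub (convex_closedBall _ _)
    simpa [Metric.mem_closedBall, dist_zero_right] using hsub2 (hRconv s h1 h2 h3 hp)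
  have key : ∀ (x : Set X), x.encard ≤ n → x.Nontrivial → ∀ a ∈ x, ∀ b ∈ x,
      (fun z => Metric.diam x • z + a) '' R ((fun z => (Metric.diam x)⁻¹ • (z - a)) '' x) =
      (fun z => Metric.diam x • z + b) '' R ((fun z => (Metric.diam x)⁻¹ • (z - b)) '' x) := by
    intro x hxn hnt a ha b hb
    have hxf := hfin x hxn
    have hd := hdpos x hxf hnt
    obtain ⟨hna, hda, h0a⟩ := Nfacts x a ha hxn hnt
    obtain ⟨hnb, hdb, h0b⟩ := Nfacts x b hb hxn hnt
    have himg : (fun z => (Metric.diam x)⁻¹ • (z - b)) '' x =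
        (fun w => w + (Metric.diam x)⁻¹ • (a - b)) ''
          ((fun z => (Metric.diam x)⁻¹ • (z - a)) '' x) := by
      rw [Set.image_image]
      refine Set.image_congr' (fun z => ?_)
      module
    have htr := hRtrans _ ((Metric.diam x)⁻¹ • (a - b)) hna hda h0a
      (by rw [← himg]; exact hnb) (by rw [← himg]; exact hdb) (by rw [← himg]; exact h0b)
    conv_rhs => rw [himg, htr, Set.image_image]
    refine Set.image_congr' (fun z => ?_)
    show Metric.diam x • z + a = Metric.diam x • (z + (Metric.diam x)⁻¹ • (a - b)) + b
    rw [smul_add, smul_inv_smul₀ hd.ne']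
    module
  let r : Set X → Set X := fun x =>
    if h : x.Nontrivial then
      (fun z => Metric.diam x • z + h.nonempty.some) ''
        R ((fun z => (Metric.diam x)⁻¹ • (z - h.nonempty.some)) '' x)
    else x
  have hchoose : ∀ (x : Set X) (h : x.Nontrivial), h.nonempty.some ∈ x := fun x h => h.nonempty.some_mem
  have rEq : ∀ (x : Set X), x.encard ≤ n → ∀ (h : x.Nontrivial), ∀ a ∈ x,
      r x = (fun z => Metric.diam x • z + a) ''
        R ((fun z => (Metric.diam x)⁻¹ • (z - a)) '' x) := by
    intro x hxn h a ha
    simp only [r]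
    rw [dif_pos h]
    exact key x hxn h h.nonempty.some (hchoose x h) a ha
  have rTriv : ∀ x : Set X, ¬x.Nontrivial → r x = x := by
    intro x h; simp only [r]; rw [dif_neg h]
  have rCard : ∀ x : Set X, x.Nonempty → x.encard ≤ n → (r x).Nonempty ∧ (r x).encard ≤ k := by
    intro x hne hxn
    by_cases h : x.Nontrivial
    · have hxf := hfin x hxn
      have hd := hdpos x hxf h
      have ha := hchoose x h
      rw [rEq x hxn h _ ha]
      obtain ⟨h1, h2, h3⟩ := Nfacts x _ ha hxn h
      obtain ⟨hRne, hRf, hRc, _⟩ := Rfacts _ h1 h2 h3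
      refine ⟨hRne.image _, ?_⟩
      rw [(finj _ hd.ne' _).encard_image]
      exact hRc
    · rw [rTriv x h]
      obtain ⟨a, ha⟩ := hne
      have hx1 : x = {a} := (Set.not_nontrivial_iff.mp h).eq_singleton_of_mem ha
      rw [hx1]
      exact ⟨⟨a, rfl⟩, by rw [Set.encard_singleton]; exact_mod_cast hk1⟩
  have rFix : ∀ x : Set X, x.Nonempty → x.encard ≤ k → r x = x := by
    intro x hne hxk
    by_cases h : x.Nontrivial
    · have hxn : x.encard ≤ n :=
        hxk.trans (by exact_mod_cast hkn.trans (Nat.sub_le n 1))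
      have hxf := hfin x hxn
      have hd := hdpos x hxf h
      have ha := hchoose x h
      obtain ⟨h1, h2, h3⟩ := Nfacts x _ ha hxn h
      rw [rEq x hxn h _ ha]
      rw [hRid _ h1 h2 h3 (by rw [(ginj _ (inv_ne_zero hd.ne') _).encard_image]; exact hxk)]
      rw [Set.image_image]
      have hid : ∀ z, Metric.diam x • ((Metric.diam x)⁻¹ • (z - h.nonempty.some)) + h.nonempty.some = z := by
        intro z; rw [smul_inv_smul₀ hd.ne', sub_add_cancel]
      rw [Set.image_congr' hid, Set.image_id']
    · exact rTriv x h
  have rHom : ∀ (x : Set X) (t : ℝ) (v : X), x.Nonempty → x.encard ≤ n → 0 ≤ t →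
      r ((fun a => t • a + v) '' x) = (fun a => t • a + v) '' r x := by
    intro x t v hne hxn ht
    rcases eq_or_lt_of_le ht with rfl | ht
    · have h1 : (fun a : X => (0:ℝ) • a + v) '' x = {v} := by
        obtain ⟨a, ha⟩ := hne
        refine Set.eq_singleton_iff_unique_mem.mpr ⟨⟨a, ha, by simp⟩, ?_⟩
        rintro _ ⟨z, hz, rfl⟩; simp
      obtain ⟨p, hp⟩ := (rCard x hne hxn).1
      rw [h1, rTriv _ (Set.not_nontrivial_iff.mpr Set.subsingleton_singleton)]
      symm
      refine Set.eq_singleton_iff_unique_mem.mpr ⟨⟨p, hp, by simp⟩, ?_⟩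
      rintro _ ⟨z, hz, rfl⟩; simp
    · by_cases h : x.Nontrivial
      · have hxf := hfin x hxn
        have hd := hdpos x hxf h
        have hinj : Function.Injective (fun z : X => t • z + v) := finj t ht.ne' v
        have hnt' : ((fun a : X => t • a + v) '' x).Nontrivial := by
          obtain ⟨p, hp, q, hq, hpq⟩ := h
          exact ⟨_, Set.mem_image_of_mem _ hp, _, Set.mem_image_of_mem _ hq,
            fun hc => hpq (hinj hc)⟩
        have hxn' : ((fun a : X => t • a + v) '' x).encard ≤ n := by
          rw [hinj.encard_image]; exact hxn
        have hd' : Metric.diam ((fun a : X => t • a + v) '' x) = t * Metric.diam x :=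
          my_diam_image_eq ht.le
            (fun z w => (distf t v z w).trans (by rw [abs_of_pos ht])) hxf.isBounded
        have ha := hchoose x h
        have ha' : t • h.nonempty.some + v ∈ (fun a : X => t • a + v) '' x :=
          Set.mem_image_of_mem _ ha
        rw [rEq _ hxn' hnt' _ ha', rEq x hxn h _ ha]
        have hscal : ((t * Metric.diam x)⁻¹ * t) = (Metric.diam x)⁻¹ := by
          rw [mul_inv, mul_comm t⁻¹ (Metric.diam x)⁻¹, mul_assoc,
            inv_mul_cancel₀ ht.ne', mul_one]
        have hkey1 : (fun z => (Metric.diam ((fun a : X => t • a + v) '' x))⁻¹ •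
              (z - (t • h.nonempty.some + v))) '' ((fun a : X => t • a + v) '' x) =
            (fun z => (Metric.diam x)⁻¹ • (z - h.nonempty.some)) '' x := by
          rw [hd', Set.image_image]
          refine Set.image_congr' (fun z => ?_)
          show (t * Metric.diam x)⁻¹ • (t • z + v - (t • h.nonempty.some + v)) =
            (Metric.diam x)⁻¹ • (z - h.nonempty.some)
          have h2 : t • z + v - (t • h.nonempty.some + v) = t • (z - h.nonempty.some) := by module
          rw [h2, smul_smul, hscal]
        rw [hkey1, hd', Set.image_image]
        refine Set.image_congr' (fun z => ?_)
        show (t * Metric.diam x) • z + (t • h.nonempty.some + v) =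
          t • (Metric.diam x • z + h.nonempty.some) + v
        module
      · obtain ⟨a, ha⟩ := hne
        have hx1 : x = {a} := (Set.not_nontrivial_iff.mp h).eq_singleton_of_mem ha
        rw [hx1, Set.image_singleton,
          rTriv _ (Set.not_nontrivial_iff.mpr Set.subsingleton_singleton),
          rTriv _ (Set.not_nontrivial_iff.mpr Set.subsingleton_singleton),
          Set.image_singleton]
  -- mixed case of the Lipschitz estimate
  have rMix : ∀ (a : X) (y : Set X), y.encard ≤ n → y.Nontrivial →
      Metric.hausdorffDist (r {a}) (r y) ≤ 3 * Metric.hausdorffDist {a} y := by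
    intro a y hyn hy
    have hyf := hfin y hyn
    have hd := hdpos y hyf hy
    have hdHnn : (0:ℝ) ≤ Metric.hausdorffDist ({a} : Set X) y := Metric.hausdorffDist_nonneg
    have hfin1 : EMetric.hausdorffEdist ({a} : Set X) y ≠ ⊤ :=
      Metric.hausdorffEdist_ne_top_of_nonempty_of_bounded ⟨a, rfl⟩ hy.nonempty
        (Set.finite_singleton a).isBounded hyf.isBounded
    obtain ⟨b, hb, hab⟩ := my_exists_near hyf hy.nonempty hfin1 (Set.mem_singleton a)
    have hdy : Metric.diam y ≤ 2 * Metric.hausdorffDist ({a} : Set X) y := by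
      have h0 := my_diam_le (Set.finite_singleton a) ⟨a, rfl⟩ hyf hy.nonempty
      simpa [Metric.diam_singleton] using h0
    obtain ⟨h1, h2, h3⟩ := Nfacts y b hb hyn hy
    obtain ⟨hRne, hRf, hRc, hRnorm⟩ := Rfacts _ h1 h2 h3
    rw [rTriv {a} (Set.not_nontrivial_iff.mpr Set.subsingleton_singleton),
      rEq y hyn hy b hb]
    have hptw : ∀ p ∈ R ((fun z => (Metric.diam y)⁻¹ • (z - b)) '' y),
        dist a (Metric.diam y • p + b) ≤ 3 * Metric.hausdorffDist ({a} : Set X) y := by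
      intro p hp
      have e1 : dist b (Metric.diam y • p + b) = Metric.diam y * ‖p‖ := by
        rw [dist_eq_norm]
        have e2 : b - (Metric.diam y • p + b) = -(Metric.diam y • p) := by module
        rw [e2, norm_neg, norm_smul, Real.norm_eq_abs, abs_of_pos hd]
      have e3 : Metric.diam y * ‖p‖ ≤ Metric.diam y * 1 :=
        mul_le_mul_of_nonneg_left (hRnorm p hp) hd.le
      calc dist a (Metric.diam y • p + b)
          ≤ dist a b + dist b (Metric.diam y • p + b) := dist_triangle _ _ _
        _ ≤ Metric.hausdorffDist ({a} : Set X) y + Metric.diam y * ‖p‖ := by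
            rw [e1]; exact add_le_add hab le_rfl
        _ ≤ Metric.hausdorffDist ({a} : Set X) y + Metric.diam y := by
            have := e3; linarith
        _ ≤ 3 * Metric.hausdorffDist ({a} : Set X) y := by linarith
    refine Metric.hausdorffDist_le_of_mem_dist (by linarith) ?_ ?_
    · intro z hz
      rw [Set.mem_singleton_iff] at hz
      subst hz
      obtain ⟨p, hp⟩ := hRne
      exact ⟨_, Set.mem_image_of_mem _ hp, hptw p hp⟩
    · rintro _ ⟨p, hp, rfl⟩
      exact ⟨a, Set.mem_singleton a, by rw [dist_comm]; exact hptw p hp⟩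
  refine ⟨r, rCard, rFix, rHom, ?_⟩
  intro x y hxne hxn hyne hyn
  have hdHnn : (0:ℝ) ≤ Metric.hausdorffDist x y := Metric.hausdorffDist_nonneg
  have hcoef : (1:ℝ) ≤ 6 * L + 5 := by linarith
  by_cases hx : x.Nontrivial <;> by_cases hy : y.Nontrivial
  · -- main case: both nontrivial
    have hxf := hfin x hxn
    have hyf := hfin y hyn
    have hdx := hdpos x hxf hx
    have hdy := hdpos y hyf hy
    have hfinxy : EMetric.hausdorffEdist x y ≠ ⊤ :=
      Metric.hausdorffEdist_ne_top_of_nonempty_of_bounded hxne hyne hxf.isBounded hyf.isBounded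
    obtain ⟨a, ha⟩ := hxne
    obtain ⟨b, hb, hab⟩ := my_exists_near hyf hyne hfinxy ha
    have hΔ : |Metric.diam x - Metric.diam y| ≤ 2 * Metric.hausdorffDist x y := by
      have h1 := my_diam_le hxf ⟨a, ha⟩ hyf hyne
      have h2 := my_diam_le hyf hyne hxf ⟨a, ha⟩
      rw [Metric.hausdorffDist_comm] at h2
      rw [abs_le]; constructor <;> linarith
    obtain ⟨hx1, hx2, hx3⟩ := Nfacts x a ha hxn hx
    obtain ⟨hy1, hy2, hy3⟩ := Nfacts y b hb hyn hy
    obtain ⟨hRxne, hRxf, hRxc, hRxnorm⟩ := Rfacts _ hx1 hx2 hx3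
    obtain ⟨hRyne, hRyf, hRyc, hRynorm⟩ := Rfacts _ hy1 hy2 hy3
    have habs : (0:ℝ) ≤ |Metric.diam x - Metric.diam y| := abs_nonneg _
    have hd0 : (0:ℝ) ≤ dist a b := dist_nonneg
    -- step A
    have hA : Metric.hausdorffDist ((fun z => (Metric.diam x)⁻¹ • (z - a)) '' x)
        ((fun z => (Metric.diam y)⁻¹ • (z - b)) '' y) ≤
        (Metric.diam x)⁻¹ * (Metric.hausdorffDist x y +
          (|Metric.diam x - Metric.diam y| + dist a b)) := by
      have hmid1 : Metric.hausdorffDist ((fun z => (Metric.diam x)⁻¹ • (z - a)) '' x)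
          ((fun z => (Metric.diam x)⁻¹ • (z - a)) '' y) ≤
          (Metric.diam x)⁻¹ * Metric.hausdorffDist x y :=
        my_hd_map_le (inv_nonneg.mpr hdx.le)
          (fun z w => (distg _ a z w).trans (by rw [abs_of_pos (inv_pos.mpr hdx)]))
          hxf ⟨a, ha⟩ hyf hyne
      have hmid2 : Metric.hausdorffDist ((fun z => (Metric.diam x)⁻¹ • (z - a)) '' y)
          ((fun z => (Metric.diam y)⁻¹ • (z - b)) '' y) ≤
          (Metric.diam x)⁻¹ * (|Metric.diam x - Metric.diam y| + dist a b) := by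
        refine my_hd_two_maps hyne
          (mul_nonneg (inv_nonneg.mpr hdx.le) (by linarith)) ?_
        intro q hq
        have e1 : (Metric.diam x)⁻¹ • (q - a) - (Metric.diam y)⁻¹ • (q - b) =
            ((Metric.diam x)⁻¹ - (Metric.diam y)⁻¹) • (q - b) +
              (Metric.diam x)⁻¹ • (b - a) := by module
        have e2 : ‖q - b‖ ≤ Metric.diam y := by
          rw [← dist_eq_norm]; exact Metric.dist_le_diam_of_mem hyf.isBounded hq hb
        have e3 : |(Metric.diam x)⁻¹ - (Metric.diam y)⁻¹| =
            (Metric.diam x)⁻¹ * (|Metric.diam x - Metric.diam y| * (Metric.diam y)⁻¹) := by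
          have e4 : (Metric.diam x)⁻¹ - (Metric.diam y)⁻¹ =
              (Metric.diam y - Metric.diam x) * ((Metric.diam x)⁻¹ * (Metric.diam y)⁻¹) := by
            field_simp
          rw [e4, abs_mul, abs_mul, abs_of_pos (inv_pos.mpr hdx),
            abs_of_pos (inv_pos.mpr hdy), abs_sub_comm]
          ring
        calc dist ((Metric.diam x)⁻¹ • (q - a)) ((Metric.diam y)⁻¹ • (q - b))
            = ‖((Metric.diam x)⁻¹ - (Metric.diam y)⁻¹) • (q - b) +
                (Metric.diam x)⁻¹ • (b - a)‖ := by rw [dist_eq_norm, e1]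
          _ ≤ ‖((Metric.diam x)⁻¹ - (Metric.diam y)⁻¹) • (q - b)‖ +
                ‖(Metric.diam x)⁻¹ • (b - a)‖ := norm_add_le _ _
          _ = |(Metric.diam x)⁻¹ - (Metric.diam y)⁻¹| * ‖q - b‖ +
                (Metric.diam x)⁻¹ * dist a b := by
              rw [norm_smul, norm_smul, Real.norm_eq_abs, Real.norm_eq_abs,
                abs_of_pos (inv_pos.mpr hdx), dist_eq_norm, norm_sub_rev a b]
          _ ≤ |(Metric.diam x)⁻¹ - (Metric.diam y)⁻¹| * Metric.diam y +
                (Metric.diam x)⁻¹ * dist a b := by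
              gcongr
          _ = (Metric.diam x)⁻¹ * (|Metric.diam x - Metric.diam y| + dist a b) := by
              rw [e3, mul_assoc, mul_assoc, inv_mul_cancel₀ hdy.ne', mul_one, mul_add]
      have hfinA : EMetric.hausdorffEdist ((fun z => (Metric.diam x)⁻¹ • (z - a)) '' x)
          ((fun z => (Metric.diam x)⁻¹ • (z - a)) '' y) ≠ ⊤ :=
        Metric.hausdorffEdist_ne_top_of_nonempty_of_bounded (Set.Nonempty.image _ ⟨a, ha⟩)
          (hyne.image _) (hxf.image _).isBounded (hyf.image _).isBounded
      calc Metric.hausdorffDist ((fun z => (Metric.diam x)⁻¹ • (z - a)) '' x)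
            ((fun z => (Metric.diam y)⁻¹ • (z - b)) '' y)
          ≤ Metric.hausdorffDist ((fun z => (Metric.diam x)⁻¹ • (z - a)) '' x)
              ((fun z => (Metric.diam x)⁻¹ • (z - a)) '' y) +
            Metric.hausdorffDist ((fun z => (Metric.diam x)⁻¹ • (z - a)) '' y)
              ((fun z => (Metric.diam y)⁻¹ • (z - b)) '' y) :=
            Metric.hausdorffDist_triangle hfinA
        _ ≤ (Metric.diam x)⁻¹ * Metric.hausdorffDist x y +
              (Metric.diam x)⁻¹ * (|Metric.diam x - Metric.diam y| + dist a b) :=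
            add_le_add hmid1 hmid2
        _ = (Metric.diam x)⁻¹ * (Metric.hausdorffDist x y +
              (|Metric.diam x - Metric.diam y| + dist a b)) := by ring
    -- step B
    rw [rEq x hxn hx a ha, rEq y hyn hy b hb]
    have hT1 : Metric.hausdorffDist
        ((fun z => Metric.diam x • z + a) '' R ((fun z => (Metric.diam x)⁻¹ • (z - a)) '' x))
        ((fun z => Metric.diam x • z + a) '' R ((fun z => (Metric.diam y)⁻¹ • (z - b)) '' y)) ≤
        Metric.diam x * Metric.hausdorffDist
          (R ((fun z => (Metric.diam x)⁻¹ • (z - a)) '' x))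
          (R ((fun z => (Metric.diam y)⁻¹ • (z - b)) '' y)) :=
      my_hd_map_le hdx.le (fun z w => (distf _ a z w).trans (by rw [abs_of_pos hdx]))
        hRxf hRxne hRyf hRyne
    have hT1' := hRlip _ _ hx1 hx2 hx3 hy1 hy2 hy3
    have hT2 : Metric.hausdorffDist
        ((fun z => Metric.diam x • z + a) '' R ((fun z => (Metric.diam y)⁻¹ • (z - b)) '' y))
        ((fun z => Metric.diam y • z + b) '' R ((fun z => (Metric.diam y)⁻¹ • (z - b)) '' y)) ≤
        |Metric.diam x - Metric.diam y| + dist a b := by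
      refine my_hd_two_maps hRyne (by linarith) ?_
      intro p hp
      have e1 : (Metric.diam x • p + a) - (Metric.diam y • p + b) =
          (Metric.diam x - Metric.diam y) • p + (a - b) := by module
      calc dist (Metric.diam x • p + a) (Metric.diam y • p + b)
          = ‖(Metric.diam x - Metric.diam y) • p + (a - b)‖ := by rw [dist_eq_norm, e1]
        _ ≤ ‖(Metric.diam x - Metric.diam y) • p‖ + ‖a - b‖ := norm_add_le _ _
        _ = |Metric.diam x - Metric.diam y| * ‖p‖ + dist a b := by
            rw [norm_smul, Real.norm_eq_abs, ← dist_eq_norm]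
        _ ≤ |Metric.diam x - Metric.diam y| * 1 + dist a b := by
            gcongr; exact hRynorm p hp
        _ = |Metric.diam x - Metric.diam y| + dist a b := by ring
    have hfinB : EMetric.hausdorffEdist
        ((fun z => Metric.diam x • z + a) '' R ((fun z => (Metric.diam x)⁻¹ • (z - a)) '' x))
        ((fun z => Metric.diam x • z + a) '' R ((fun z => (Metric.diam y)⁻¹ • (z - b)) '' y))
        ≠ ⊤ :=
      Metric.hausdorffEdist_ne_top_of_nonempty_of_bounded (hRxne.image _) (hRyne.image _)
        (hRxf.image _).isBounded (hRyf.image _).isBounded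
    have main : Metric.hausdorffDist
        ((fun z => Metric.diam x • z + a) '' R ((fun z => (Metric.diam x)⁻¹ • (z - a)) '' x))
        ((fun z => Metric.diam y • z + b) '' R ((fun z => (Metric.diam y)⁻¹ • (z - b)) '' y)) ≤
        Metric.diam x * (L * ((Metric.diam x)⁻¹ * (Metric.hausdorffDist x y +
          (|Metric.diam x - Metric.diam y| + dist a b)))) +
          (|Metric.diam x - Metric.diam y| + dist a b) := by
      calc Metric.hausdorffDist _ _
          ≤ Metric.hausdorffDist _ _ + Metric.hausdorffDist _ _ :=
            Metric.hausdorffDist_triangle hfinB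
        _ ≤ Metric.diam x * Metric.hausdorffDist
              (R ((fun z => (Metric.diam x)⁻¹ • (z - a)) '' x))
              (R ((fun z => (Metric.diam y)⁻¹ • (z - b)) '' y)) +
            (|Metric.diam x - Metric.diam y| + dist a b) := add_le_add hT1 hT2
        _ ≤ Metric.diam x * (L * ((Metric.diam x)⁻¹ * (Metric.hausdorffDist x y +
              (|Metric.diam x - Metric.diam y| + dist a b)))) +
            (|Metric.diam x - Metric.diam y| + dist a b) := by
            refine add_le_add ?_ le_rfl
            refine mul_le_mul_of_nonneg_left ?_ hdx.le
            exact hT1'.trans (mul_le_mul_of_nonneg_left hA hL)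
    have hsimp : Metric.diam x * (L * ((Metric.diam x)⁻¹ * (Metric.hausdorffDist x y +
        (|Metric.diam x - Metric.diam y| + dist a b)))) =
        L * (Metric.hausdorffDist x y +
        (|Metric.diam x - Metric.diam y| + dist a b)) := by
      field_simp
    rw [hsimp] at main
    have hfour : L * (Metric.hausdorffDist x y +
        (|Metric.diam x - Metric.diam y| + dist a b)) ≤
        L * (4 * Metric.hausdorffDist x y) :=
      mul_le_mul_of_nonneg_left (by linarith) hL
    have hLd : 0 ≤ L * Metric.hausdorffDist x y := mul_nonneg hL hdHnn
    linarith
  · -- x nontrivial, y trivial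
    obtain ⟨b, hb⟩ := hyne
    have hy1 : y = {b} := (Set.not_nontrivial_iff.mp hy).eq_singleton_of_mem hb
    rw [Metric.hausdorffDist_comm (s := r x), Metric.hausdorffDist_comm (s := x), hy1]
    refine (rMix b x hxn hx).trans ?_
    exact mul_le_mul_of_nonneg_right (by linarith) Metric.hausdorffDist_nonneg
  · -- x trivial, y nontrivial
    obtain ⟨a, ha⟩ := hxne
    have hx1 : x = {a} := (Set.not_nontrivial_iff.mp hx).eq_singleton_of_mem ha
    rw [hx1]
    refine (rMix a y hyn hy).trans ?_
    exact mul_le_mul_of_nonneg_right (by linarith) Metric.hausdorffDist_nonneg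
  · -- both trivial
    rw [rTriv x hx, rTriv y hy]
    exact le_mul_of_one_le_left hdHnn hcoef
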